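/- For any two probability density functions q0 and q1 with respect to a common dominating measure μ, one has ∫ min(q0,q1) dμ ≥ 1 - (1/2)·(∫ q0²/q1 dμ - 1)^{1/2}. -/

import Mathlib

open MeasureTheory

/-- For probability densities q0, q1 w.r.t. a common dominating measure μ,
∫ min(q0,q1) dμ ≥ 1 - (1/2)·(∫ q0²/q1 dμ - 1)^{1/2}. -/
theorem stmt0 {Ω : Type*} [MeasurableSpace Ω] (μ : Measure Ω)
    (q0 q1 : Ω → ℝ)
    (h0 : ∀ ω, 0 ≤ q0 ω) (h1 : ∀ ω, 0 ≤ q1 ω)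
    (h1pos : ∀ᵐ ω ∂μ, 0 < q1 ω)
    (hi0 : Integrable q0 μ) (hi1 : Integrable q1 μ)
    (hint : Integrable (fun ω => (q0 ω) ^ 2 / q1 ω) μ)
    (hq0 : ∫ ω, q0 ω ∂μ = 1) (hq1 : ∫ ω, q1 ω ∂μ = 1) :
    1 - (1 / 2) * Real.sqrt ((∫ ω, (q0 ω) ^ 2 / q1 ω ∂μ) - 1)
      ≤ ∫ ω, min (q0 ω) (q1 ω) ∂μ := by
  set A := ∫ ω, (q0 ω) ^ 2 / q1 ω ∂μ with hA
  have habs : Integrable (fun ω => |q0 ω - q1 ω|) μ := (hi0.sub hi1).abs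
  -- Step 1: ∫ min = 1 - (1/2) ∫ |q0 - q1|
  have hminf : (fun ω => min (q0 ω) (q1 ω))
      = fun ω => (q0 ω + q1 ω - |q0 ω - q1 ω|) / 2 := by
    funext ω
    rcases le_total (q0 ω) (q1 ω) with h | h
    · rw [min_eq_left h, abs_of_nonpos (by linarith)]; ring
    · rw [min_eq_right h, abs_of_nonneg (by linarith)]; ring
  have hadd : Integrable (fun ω => q0 ω + q1 ω) μ := hi0.add hi1
  have hmin : ∫ ω, min (q0 ω) (q1 ω) ∂μ
      = (1 + 1 - ∫ ω, |q0 ω - q1 ω| ∂μ) / 2 := by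
    rw [hminf]
    rw [integral_div, integral_sub hadd habs, integral_add hi0 hi1, hq0, hq1]
  -- a.e. pointwise facts
  set f : Ω → ℝ := fun ω => |q0 ω - q1 ω| / Real.sqrt (q1 ω) with hf
  set g : Ω → ℝ := fun ω => Real.sqrt (q1 ω) with hg
  have hfg : (fun ω => f ω * g ω) =ᵐ[μ] (fun ω => |q0 ω - q1 ω|) := by
    filter_upwards [h1pos] with ω hω
    have : Real.sqrt (q1 ω) ≠ 0 := ne_of_gt (Real.sqrt_pos.2 hω)
    exact div_mul_cancel₀ _ this
  have hfsq : (fun ω => f ω ^ 2) =ᵐ[μ] (fun ω => (q0 ω - q1 ω) ^ 2 / q1 ω) := by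
    filter_upwards [h1pos] with ω hω
    simp only [hf, div_pow, sq_abs, Real.sq_sqrt hω.le]
  have hgsq : (fun ω => g ω ^ 2) =ᵐ[μ] (fun ω => q1 ω) := by
    filter_upwards [h1pos] with ω hω
    simp [hg, Real.sq_sqrt hω.le]
  have hexp : (fun ω => (q0 ω - q1 ω) ^ 2 / q1 ω)
      =ᵐ[μ] (fun ω => (q0 ω) ^ 2 / q1 ω - 2 * q0 ω + q1 ω) := by
    filter_upwards [h1pos] with ω hω
    field_simp
    ring
  have hsub : Integrable (fun ω => (q0 ω) ^ 2 / q1 ω - 2 * q0 ω) μ :=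
    hint.sub (hi0.const_mul 2)
  have haux : Integrable (fun ω => (q0 ω) ^ 2 / q1 ω - 2 * q0 ω + q1 ω) μ :=
    hsub.add hi1
  have hi2 : Integrable (fun ω => (q0 ω - q1 ω) ^ 2 / q1 ω) μ :=
    haux.congr hexp.symm
  -- measurability
  have hm1 : AEMeasurable q1 μ := hi1.aemeasurable
  have hmf : AEStronglyMeasurable f μ :=
    (((hi0.sub hi1).abs.aemeasurable.div (Real.continuous_sqrt.measurable.comp_aemeasurable hm1)).aestronglyMeasurable)
  have hmg : AEStronglyMeasurable g μ := (Real.continuous_sqrt.measurable.comp_aemeasurable hm1).aestronglyMeasurable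
  have hfL2 : MemLp f 2 μ := by
    rw [memLp_two_iff_integrable_sq hmf]
    exact hi2.congr hfsq.symm
  have hgL2 : MemLp g 2 μ := by
    rw [memLp_two_iff_integrable_sq hmg]
    exact hi1.congr hgsq.symm
  -- the chi-square-like integral
  have hAint : ∫ ω, (q0 ω - q1 ω) ^ 2 / q1 ω ∂μ = A - 1 := by
    rw [integral_congr_ae hexp, integral_add hsub hi1,
      integral_sub hint (hi0.const_mul 2), MeasureTheory.integral_const_mul, hq0, hq1, hA]
    ring
  have hAnn : 0 ≤ A - 1 := by
    rw [← hAint]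
    refine integral_nonneg_of_ae ?_
    filter_upwards [h1pos] with ω hω
    positivity
  -- Cauchy-Schwarz
  have hconj : (2 : ℝ).HolderConjugate 2 := by
    exact Real.HolderConjugate.two_two
  have htwo : ENNReal.ofReal (2 : ℝ) = 2 := by norm_num
  have hCS := integral_mul_le_Lp_mul_Lq_of_nonneg hconj
    (f := f) (g := g)
    (Filter.Eventually.of_forall fun ω => by positivity)
    (Filter.Eventually.of_forall fun ω => Real.sqrt_nonneg _)
    (htwo ▸ hfL2) (htwo ▸ hgL2)
  have hf2 : ∫ a, f a ^ (2 : ℝ) ∂μ = A - 1 := by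
    rw [← hAint]
    refine integral_congr_ae ?_
    filter_upwards [hfsq] with ω hω
    rw [show ((2:ℝ) : ℝ) = ((2:ℕ) : ℝ) by norm_num, Real.rpow_natCast]
    exact hω
  have hg2 : ∫ a, g a ^ (2 : ℝ) ∂μ = 1 := by
    rw [← hq1]
    refine integral_congr_ae ?_
    filter_upwards [hgsq] with ω hω
    rw [show ((2:ℝ) : ℝ) = ((2:ℕ) : ℝ) by norm_num, Real.rpow_natCast]
    exact hω
  have hkey : ∫ ω, |q0 ω - q1 ω| ∂μ ≤ Real.sqrt (A - 1) := by
    have h1' : ∫ a, f a * g a ∂μ = ∫ ω, |q0 ω - q1 ω| ∂μ := integral_congr_ae hfg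
    rw [h1', hf2, hg2] at hCS
    calc ∫ ω, |q0 ω - q1 ω| ∂μ ≤ (A - 1) ^ (1 / (2:ℝ)) * (1:ℝ) ^ (1 / (2:ℝ)) := hCS
      _ = Real.sqrt (A - 1) := by rw [Real.one_rpow, mul_one, Real.sqrt_eq_rpow]
  rw [hmin]
  linarith
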